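/- arXiv:1502.04741 — 2 statements merged into one kernel-verified Lean document; each statement's English description precedes it below -/
import Mathlib

section
/- Let F : C ⥤ C' be a target cover of categories. Then for every n ≥ 1, the commutative square whose horizontal maps are the 0th face maps of the nerves, d₀ : (nerve C)_n → (nerve C)_{n−1} and d₀ : (nerve C')_n → (nerve C')_{n−1} (the face map omitting vertex 0, which for n = 1 sends a morphism to its target), and whose vertical maps are induced by F on n-simplices and (n−1)-simplices, is a pullback square of types. -/
open CategoryTheory

namespace NerveD0Aux

lemma precomp_comp {D E : Type*} [Category D] [Category E] {n : ℕ}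
    (G : D ⥤ E) (y : ComposableArrows D n) {X : D} (f : X ⟶ y.left) :
    (y.precomp f) ⋙ G = (ComposableArrows.precomp (y ⋙ G) (G.map f)) :=
  ComposableArrows.ext_succ rfl rfl (by simp; erw [Category.id_comp, Category.comp_id]; rfl)

lemma precomp_inj {D : Type*} [Category D] {n : ℕ} {y : ComposableArrows D n}
    {X Y : D} {u : X ⟶ y.left} {v : Y ⟶ y.left}
    (h : y.precomp u = y.precomp v) : (⟨X, u⟩ : Σ Z : D, Z ⟶ y.left) = ⟨Y, v⟩ := by
  have h0 : X = Y := congrArg (fun z => z.obj 0) h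
  subst h0
  suffices hu : u = v by rw [hu]
  have := Functor.congr_hom h (homOfLE (show (0 : Fin (n + 2)) ≤ 1 by simp [Fin.le_def]))
  simp at this
  erw [Category.id_comp, Category.comp_id] at this
  exact this

end NerveD0Aux

/-- A functor is a target cover (discrete fibration) if, for every object `b` of the source,
`(a, f : a ⟶ b) ↦ (F.obj a, F.map f)` is a bijection onto pairs `(a', φ : a' ⟶ F.obj b)`. -/
def IsTargetCover {C : Type*} {C' : Type*} [Category C] [Category C'] (F : C ⥤ C') : Prop :=
  ∀ b : C, Function.Bijective
    (fun p : Σ a : C, (a ⟶ b) => (⟨F.obj p.1, F.map p.2⟩ : Σ a' : C', (a' ⟶ F.obj b)))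

/-- A commutative square of types which is a pullback square. -/
def IsPB {A : Type*} {B : Type*} {C : Type*} {Z : Type*}
    (f : A → B) (j : A → C) (h : B → Z) (k : C → Z) : Prop :=
  (∀ a, h (f a) = k (j a)) ∧ ∀ (b : B) (c : C), h b = k c → ∃! a : A, f a = b ∧ j a = c

/-- The map induced by a functor `F` on the `m`-simplices of the nerves. -/
def nerveWhisker {C : Type*} {C' : Type*} [Category C] [Category C'] (F : C ⥤ C') (m : ℕ) :
    (nerve C).obj (Opposite.op (SimplexCategory.mk m)) →
      (nerve C').obj (Opposite.op (SimplexCategory.mk m)) :=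
  fun X => X ⋙ F

/-- If `F : C ⥤ C'` is a target cover, then for every `n ≥ 1` the square formed by the
0th face maps `d₀` of the nerves and the maps induced by `F` on simplices is a pullback
square of types. -/
theorem nerve_d0_pullback_of_targetCover
    {C : Type*} {C' : Type*} [Category C] [Category C'] (F : C ⥤ C')
    (hF : IsTargetCover F) (n : ℕ) :
    IsPB ((nerve C).map (SimplexCategory.δ (0 : Fin (n + 2))).op)
      (nerveWhisker F (n + 1)) (nerveWhisker F n)
      ((nerve C').map (SimplexCategory.δ (0 : Fin (n + 2))).op) := by
  constructor
  · intro a; rfl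
  · intro b c h
    obtain ⟨c₀, X, g, rfl⟩ := c.precomp_surjective
    have h' : (b ⋙ F : ComposableArrows C' n) = c₀ := h
    subst h'
    obtain ⟨⟨a, f⟩, hf, huniq⟩ := (hF b.left).existsUnique ⟨X, g⟩
    injection hf with h1 h2
    subst h1
    rw [heq_eq_eq] at h2
    subst h2
    refine ⟨b.precomp f, ⟨rfl, NerveD0Aux.precomp_comp F b f⟩, ?_⟩
    rintro A ⟨hA1, hA2⟩
    obtain ⟨A₀, Y, u, rfl⟩ := A.precomp_surjective
    have hA1' : A₀ = b := hA1
    subst hA1'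
    rw [show nerveWhisker F (n + 1) (A₀.precomp u) = (A₀.precomp u) ⋙ F from rfl,
      NerveD0Aux.precomp_comp F A₀ u] at hA2
    have := huniq ⟨Y, u⟩ (NerveD0Aux.precomp_inj hA2)
    injection this with h1 h2
    subst h1
    rw [heq_eq_eq] at h2
    subst h2
    rfl
end

section
/- Let D : ℕ → Type be a family of types with, for each n, an action of Equiv.Perm (Fin n) on D n (no freeness assumed), and let 𝔻 be the associated endofunctor of types. Let f, g : A → B admit a common section s : B → A (f ∘ s = id and g ∘ s = id), and let h : B → C be a coequalizer of f and g in the category of types. Then 𝔻h : 𝔻B → 𝔻C is a coequalizer of 𝔻f, 𝔻g : 𝔻A → 𝔻B in the category of types, and 𝔻s is a common section of 𝔻f and 𝔻g. (The functor underlying the monad associated to an operad in Set preserves reflexive coequalizers.) -/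
/-- The relation on `D n × (Fin n → X)` identifying `(d, x)` with
`σ • (d, x) = (σ • d, x ∘ σ⁻¹)`. -/
def OpRel (D : ℕ → Type) [∀ n, MulAction (Equiv.Perm (Fin n)) (D n)] (X : Type) (n : ℕ)
    (p q : D n × (Fin n → X)) : Prop :=
  ∃ σ : Equiv.Perm (Fin n), σ • p.1 = q.1 ∧ p.2 ∘ σ.symm = q.2

/-- The endofunctor of types associated to a family `D` with symmetric group actions. -/
def DD (D : ℕ → Type) [∀ n, MulAction (Equiv.Perm (Fin n)) (D n)] (X : Type) : Type :=
  Σ n : ℕ, Quot (OpRel D X n)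

/-- The action of the endofunctor `𝔻` on functions, induced by `(d, x) ↦ (d, f ∘ x)`. -/
def DDmap (D : ℕ → Type) [∀ n, MulAction (Equiv.Perm (Fin n)) (D n)] {X Y : Type}
    (f : X → Y) : DD D X → DD D Y :=
  fun a => ⟨a.1, Quot.map (fun p => (p.1, f ∘ p.2))
    (fun p q hpq => by
      obtain ⟨σ, h1, h2⟩ := hpq
      exact ⟨σ, h1, congrArg (fun u => f ∘ u) h2⟩) a.2⟩

/-- `h : B → C` is a coequalizer of `f, g : A → B` in the category of types. -/
def IsCoeq {A B C : Type} (f g : A → B) (h : B → C) : Prop :=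
  h ∘ f = h ∘ g ∧ ∀ {W : Type} (q : B → W), q ∘ f = q ∘ g → ∃! q' : C → W, q' ∘ h = q

/-- The functor underlying the monad associated to an operad in `Set` preserves reflexive
coequalizers. -/
theorem DD_preserves_reflexive_coequalizers
    (D : ℕ → Type) [∀ n, MulAction (Equiv.Perm (Fin n)) (D n)]
    {A B C : Type} (f g : A → B) (s : B → A)
    (hsf : f ∘ s = id) (hsg : g ∘ s = id)
    (h : B → C) (hco : IsCoeq f g h) :
    IsCoeq (DDmap D f) (DDmap D g) (DDmap D h) ∧
      DDmap D f ∘ DDmap D s = id ∧ DDmap D g ∘ DDmap D s = id := by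
  classical
  obtain ⟨hfg, huniv⟩ := hco
  -- h is surjective
  have hsurj : ∀ c : C, ∃ b, h b = c := by
    obtain ⟨p, hp, hup⟩ := huniv (fun _ : B => True) rfl
    have h1 : (fun c => ∃ b, h b = c) = p := hup _ (by
      funext b; simp only [Function.comp_apply]; exact eq_true ⟨b, rfl⟩)
    have h2 : (fun _ : C => True) = p := hup _ rfl
    intro c
    have := congrFun (h1.trans h2.symm) c
    exact this ▸ trivial
  choose t ht using hsurj
  -- the basic relation
  set R : B → B → Prop := fun b b' => ∃ a, f a = b ∧ g a = b' with hR
  have hker : ∀ b b', h b = h b' ↔ Relation.EqvGen R b b' := by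
    have hqfg : Quot.mk R ∘ f = Quot.mk R ∘ g :=
      funext fun a => Quot.sound ⟨a, rfl, rfl⟩
    obtain ⟨p, hp, _⟩ := huniv (Quot.mk R) hqfg
    intro b b'
    constructor
    · intro hbb'
      have : Quot.mk R b = Quot.mk R b' := by
        have h1 := congrFun hp b
        have h2 := congrFun hp b'
        simp only [Function.comp_apply] at h1 h2
        rw [← h1, ← h2, hbb']
      exact Quot.eqvGen_exact this
    · intro hEq
      induction hEq with
      | rel a b hab => obtain ⟨a0, ha, hb⟩ := hab; rw [← ha, ← hb]; exact congrFun hfg a0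
      | refl => rfl
      | symm _ _ _ ih => exact ih.symm
      | trans _ _ _ _ _ ih1 ih2 => exact ih1.trans ih2
  -- evaluation of DDmap on Quot.mk, definitional
  have hDDmk : ∀ {X Y : Type} (u : X → Y) (n : ℕ) (d : D n) (x : Fin n → X),
      DDmap D u ⟨n, Quot.mk _ (d, x)⟩ = ⟨n, Quot.mk _ (d, u ∘ x)⟩ := fun _ _ _ _ => rfl
  refine ⟨⟨?_, ?_⟩, ?_, ?_⟩
  · funext a
    obtain ⟨n, c⟩ := a
    induction c using Quot.ind with
    | _ p =>
      obtain ⟨d, x⟩ := p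
      show (⟨n, Quot.mk _ (d, h ∘ (f ∘ x))⟩ : DD D C) = ⟨n, Quot.mk _ (d, h ∘ (g ∘ x))⟩
      rw [← Function.comp_assoc, ← Function.comp_assoc, hfg]
  · intro W q hq
    -- one-coordinate step using the section s
    have step : ∀ (n : ℕ) (d : D n) (x : Fin n → B) (i : Fin n) (b' : B),
        R (x i) b' →
        q ⟨n, Quot.mk _ (d, x)⟩ = q ⟨n, Quot.mk _ (d, Function.update x i b')⟩ := by
      rintro n d x i b' ⟨a, ha, hb⟩
      set xa : Fin n → A := Function.update (s ∘ x) i a with hxa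
      have hf : f ∘ xa = x := by
        funext j
        by_cases hj : j = i
        · subst hj; simp [hxa, ha]
        · have hxj : xa j = s (x j) := Function.update_of_ne hj _ _
          rw [Function.comp_apply, hxj]
          exact congrFun hsf (x j)
      have hg : g ∘ xa = Function.update x i b' := by
        funext j
        by_cases hj : j = i
        · subst hj; simp [hxa, hb]
        · have hxj : xa j = s (x j) := Function.update_of_ne hj _ _
          rw [Function.comp_apply, hxj, Function.update_of_ne hj]
          exact congrFun hsg (x j)
      have hq1 := congrFun hq ⟨n, Quot.mk _ (d, xa)⟩
      change q (DDmap D f ⟨n, Quot.mk _ (d, xa)⟩) = q (DDmap D g ⟨n, Quot.mk _ (d, xa)⟩) at hq1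
      rw [hDDmk, hDDmk, hf, hg] at hq1
      exact hq1
    -- Relation.EqvGen version on one coordinate
    have step' : ∀ (n : ℕ) (d : D n) (x : Fin n → B) (i : Fin n) (b b' : B),
        Relation.EqvGen R b b' →
        q ⟨n, Quot.mk _ (d, Function.update x i b)⟩ =
          q ⟨n, Quot.mk _ (d, Function.update x i b')⟩ := by
      intro n d x i b b' hEq
      induction hEq with
      | rel a c hac =>
        have := step n d (Function.update x i a) i c (by simpa using hac)
        simpa [Function.update_idem] using this
      | refl => rfl
      | symm _ _ _ ih => exact ih.symm
      | trans _ _ _ _ _ ih1 ih2 => exact ih1.trans ih2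
    -- invariance under pointwise kernel of h
    have key : ∀ (n : ℕ) (d : D n) (x x' : Fin n → B), (∀ i, h (x i) = h (x' i)) →
        q ⟨n, Quot.mk _ (d, x)⟩ = q ⟨n, Quot.mk _ (d, x')⟩ := by
      intro n d x x' hxx'
      set m : ℕ → (Fin n → B) := fun k j => if (j : ℕ) < k then x' j else x j with hm
      have hm0 : m 0 = x := by funext j; simp [hm]
      have hmn : m n = x' := by funext j; simp [hm, j.isLt]
      have hstep : ∀ k, q ⟨n, Quot.mk _ (d, m k)⟩ = q ⟨n, Quot.mk _ (d, m (k + 1))⟩ := by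
        intro k
        by_cases hk : k < n
        · set i : Fin n := ⟨k, hk⟩ with hi
          have hupd : m (k + 1) = Function.update (m k) i (x' i) := by
            funext j
            by_cases hj : (j : ℕ) = k
            · have : j = i := Fin.ext hj
              subst this
              simp [hm, hj]
            · have hj' : j ≠ i := fun hji => hj (by rw [hji])
              simp only [Function.update_of_ne hj', hm]
              have : (j : ℕ) < k + 1 ↔ (j : ℕ) < k := by omega
              simp [this]
          have hmki : m k i = x i := by simp [hm, hi]
          have hEq : Relation.EqvGen R (m k i) (x' i) := by
            rw [hmki]; exact (hker _ _).1 (hxx' i)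
          have := step' n d (m k) i (m k i) (x' i) hEq
          rwa [Function.update_eq_self, ← hupd] at this
        · have : m (k + 1) = m k := by
            funext j
            have h1 : (j : ℕ) < k := lt_of_lt_of_le j.isLt (le_of_not_gt hk)
            simp [hm, h1, Nat.lt_succ_of_lt h1]
          rw [this]
      have hall : ∀ k, q ⟨n, Quot.mk _ (d, m 0)⟩ = q ⟨n, Quot.mk _ (d, m k)⟩ := by
        intro k
        induction k with
        | zero => rfl
        | succ k ih => exact ih.trans (hstep k)
      have := hall n
      rwa [hm0, hmn] at this
    refine ⟨fun a => q (DDmap D t a), ?_, ?_⟩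
    · funext a
      obtain ⟨n, c⟩ := a
      induction c using Quot.ind with
      | _ p =>
        obtain ⟨d, x⟩ := p
        show q ⟨n, Quot.mk _ (d, t ∘ (h ∘ x))⟩ = q ⟨n, Quot.mk _ (d, x)⟩
        exact key n d _ x (fun i => ht (h (x i)))
    · intro y hy
      funext a
      obtain ⟨n, c⟩ := a
      induction c using Quot.ind with
      | _ p =>
        obtain ⟨d, yc⟩ := p
        have hxy : h ∘ (t ∘ yc) = yc := funext fun j => ht (yc j)
        have h1 := congrFun hy ⟨n, Quot.mk _ (d, t ∘ yc)⟩
        change y (DDmap D h ⟨n, Quot.mk _ (d, t ∘ yc)⟩) = q ⟨n, Quot.mk _ (d, t ∘ yc)⟩ at h1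
        rw [hDDmk, hxy] at h1
        exact h1
  · funext a
    obtain ⟨n, c⟩ := a
    induction c using Quot.ind with
    | _ p =>
      obtain ⟨d, x⟩ := p
      show (⟨n, Quot.mk _ (d, f ∘ (s ∘ x))⟩ : DD D B) = ⟨n, Quot.mk _ (d, x)⟩
      rw [← Function.comp_assoc, hsf, Function.id_comp]
  · funext a
    obtain ⟨n, c⟩ := a
    induction c using Quot.ind with
    | _ p =>
      obtain ⟨d, x⟩ := p
      show (⟨n, Quot.mk _ (d, g ∘ (s ∘ x))⟩ : DD D B) = ⟨n, Quot.mk _ (d, x)⟩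
      rw [← Function.comp_assoc, hsg, Function.id_comp]
end
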